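/- arXiv:2010.14039 — 3 statements merged into one kernel-verified Lean document; each statement's English description precedes it below -/
import Mathlib

section
/- Let P(n) = Σ_{k=0}^r c_k n^k be a polynomial with complex coefficients, let φ ∈ (0,1], and suppose that for every ε > 0 there exists N such that for all integers n ≥ N, P(n) ≠ 0 and Arg(P(n)) ∈ (π(φ−ε), πφ]. Then the leading nonzero coefficient of P has argument exactly πφ; that is, if c_r = ⋯ = c_{j+1} = 0 and c_j ≠ 0, then Arg(c_j) = πφ. -/
open Filter Complex

theorem leading_nonzero_coeff_arg
    (r : ℕ) (c : ℕ → ℂ) (φ : ℝ) (hφ : 0 < φ ∧ φ ≤ 1)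
    (h : ∀ ε : ℝ, 0 < ε → ∃ N : ℤ, ∀ n : ℤ, N ≤ n →
      (∑ k ∈ Finset.range (r + 1), c k * (n : ℂ) ^ k) ≠ 0 ∧
      Real.pi * (φ - ε) < Complex.arg (∑ k ∈ Finset.range (r + 1), c k * (n : ℂ) ^ k) ∧
      Complex.arg (∑ k ∈ Finset.range (r + 1), c k * (n : ℂ) ^ k) ≤ Real.pi * φ) :
    ∀ j : ℕ, j ≤ r → (∀ k : ℕ, j < k → k ≤ r → c k = 0) → c j ≠ 0 →
      Complex.arg (c j) = Real.pi * φ := by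
  intro j hj hzero hcj
  have pi_pos := Real.pi_pos
  set f : ℤ → ℂ := fun n => ∑ k ∈ Finset.range (r + 1), c k * (n : ℂ) ^ k with hf
  -- f n is eventually nonzero
  obtain ⟨N₀, hN₀⟩ := h 1 one_pos
  have hne : ∀ᶠ n : ℤ in atTop, f n ≠ 0 :=
    eventually_atTop.2 ⟨N₀, fun n hn => (hN₀ n hn).1⟩
  -- Step 1: arg (f n) → π φ
  have harg : Tendsto (fun n : ℤ => Complex.arg (f n)) atTop (nhds (Real.pi * φ)) := by
    rw [Metric.tendsto_nhds]
    intro ε hε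
    obtain ⟨N, hN⟩ := h (ε / Real.pi) (div_pos hε pi_pos)
    refine eventually_atTop.2 ⟨N, fun n hn => ?_⟩
    obtain ⟨-, h1, h2⟩ := hN n hn
    have hpe : Real.pi * (ε / Real.pi) = ε := by field_simp
    rw [mul_sub, hpe] at h1
    rw [Real.dist_eq, abs_sub_lt_iff]
    constructor <;> linarith
  -- Step 2: f n / n^j → c j
  have hfeq : ∀ n : ℤ, f n = ∑ k ∈ Finset.range (j + 1), c k * (n : ℂ) ^ k := by
    intro n
    show (∑ k ∈ Finset.range (r + 1), c k * (n : ℂ) ^ k) = _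
    rw [← Finset.sum_range_add_sum_Ico _ (Nat.succ_le_succ hj)]
    have : ∑ k ∈ Finset.Ico (j+1) (r+1), c k * (n : ℂ) ^ k = 0 := by
      apply Finset.sum_eq_zero
      intro k hk
      rw [Finset.mem_Ico] at hk
      rw [hzero k hk.1 (Nat.lt_succ_iff.mp hk.2), zero_mul]
    simp [this]
  have hg : Tendsto (fun n : ℤ => f n / (n : ℂ) ^ j) atTop (nhds (c j)) := by
    have heq : ∀ᶠ n : ℤ in atTop, f n / (n : ℂ) ^ j
        = c j + ∑ k ∈ Finset.range j, c k / (n : ℂ) ^ (j - k) := by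
      refine eventually_atTop.2 ⟨1, fun n hn => ?_⟩
      have hn0 : (n : ℂ) ≠ 0 := by
        exact_mod_cast (by exact_mod_cast hn.trans_lt' zero_lt_one : (0:ℤ) < n).ne'
      rw [hfeq, Finset.sum_range_succ, add_div, mul_div_assoc, div_self (pow_ne_zero _ hn0),
        mul_one, add_comm, Finset.sum_div]
      congr 1
      apply Finset.sum_congr rfl
      intro k hk
      rw [Finset.mem_range] at hk
      have hpow : (n:ℂ)^j = (n:ℂ)^k * (n:ℂ)^(j-k) := by
        rw [← pow_add]; congr 1; omega
      rw [hpow]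
      field_simp
    rw [tendsto_congr' heq]
    have hlim : Tendsto (fun n : ℤ => ∑ k ∈ Finset.range j, c k / (n : ℂ) ^ (j - k))
        atTop (nhds 0) := by
      rw [show (0 : ℂ) = ∑ k ∈ Finset.range j, 0 by simp]
      apply tendsto_finset_sum
      intro k hk
      rw [Finset.mem_range] at hk
      have h1 : Tendsto (fun n : ℤ => ((n : ℂ) ^ (j - k))⁻¹) atTop (nhds 0) := by
        rw [tendsto_zero_iff_norm_tendsto_zero]
        have h2 : Tendsto (fun n : ℤ => (((n : ℤ) : ℝ) ^ (j - k))⁻¹) atTop (nhds 0) := by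
          apply Tendsto.inv_tendsto_atTop
          exact (tendsto_pow_atTop (Nat.sub_ne_zero_of_lt hk)).comp tendsto_intCast_atTop_atTop
        refine h2.congr' ?_
        refine eventually_atTop.2 ⟨0, fun n hn => ?_⟩
        have hnn : (0:ℝ) ≤ (n:ℝ) := by exact_mod_cast hn
        simp only [norm_inv, norm_pow, Complex.norm_intCast]
        rw [_root_.abs_of_nonneg hnn]
      simpa [div_eq_mul_inv] using h1.const_mul (c k)
    simpa using (tendsto_const_nhds (x := c j)).add hlim
  -- Step 3: f n / ‖f n‖ → c j / ‖c j‖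
  have hnorm : Tendsto (fun n : ℤ => f n / (‖f n‖ : ℂ)) atTop
      (nhds (c j / (‖c j‖ : ℂ))) := by
    have hcont : Tendsto (fun n : ℤ => (f n / (n:ℂ)^j) / (‖f n / (n:ℂ)^j‖ : ℂ)) atTop
        (nhds (c j / (‖c j‖ : ℂ))) := by
      apply Tendsto.div hg
      · exact (Complex.continuous_ofReal.tendsto _).comp hg.norm
      · exact_mod_cast norm_ne_zero_iff.2 hcj
    refine hcont.congr' ?_
    filter_upwards [eventually_ge_atTop 1, hne] with n hn hfn
    have hnpos : (0:ℝ) < (n:ℝ) := by exact_mod_cast hn.trans_lt' zero_lt_one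
    have hn0 : (n : ℂ) ≠ 0 := by simpa using (ne_of_gt hnpos)
    have hfn' : (‖f n‖ : ℂ) ≠ 0 := by exact_mod_cast norm_ne_zero_iff.2 hfn
    have hnormpow : ‖(n:ℂ)^j‖ = ((n:ℝ))^j := by
      rw [norm_pow, Complex.norm_intCast, _root_.abs_of_pos hnpos]
    rw [norm_div, hnormpow, Complex.ofReal_div, Complex.ofReal_pow]
    push_cast
    field_simp
  -- Step 4: f n / ‖f n‖ → exp(πφ i)
  have hexp : Tendsto (fun n : ℤ => f n / (‖f n‖ : ℂ)) atTop
      (nhds (Complex.exp (((Real.pi * φ : ℝ) : ℂ) * Complex.I))) := by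
    have hcontexp : Continuous fun θ : ℝ => Complex.exp ((θ : ℂ) * Complex.I) := by
      continuity
    have hc : Tendsto (fun n : ℤ => Complex.exp ((Complex.arg (f n) : ℂ) * Complex.I)) atTop
        (nhds (Complex.exp (((Real.pi * φ : ℝ) : ℂ) * Complex.I))) :=
      (hcontexp.tendsto _).comp harg
    refine Filter.Tendsto.congr' ?_ hc
    filter_upwards [hne] with n hfn
    rw [eq_div_iff (by exact_mod_cast norm_ne_zero_iff.2 hfn), mul_comm]
    exact Complex.norm_mul_exp_arg_mul_I (f n)
  have hkey : c j / (‖c j‖ : ℂ) = Complex.exp (((Real.pi * φ : ℝ) : ℂ) * Complex.I) :=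
    tendsto_nhds_unique hnorm hexp
  have harg2 : Complex.arg (c j) = Complex.arg (c j / (‖c j‖ : ℂ)) := by
    rw [div_eq_mul_inv, mul_comm, ← Complex.ofReal_inv,
      Complex.arg_real_mul _ (inv_pos.2 (norm_pos_iff.2 hcj))]
  rw [harg2, hkey, Complex.exp_mul_I, Complex.arg_cos_add_sin_mul_I]
  constructor
  · nlinarith
  · nlinarith [hφ.1, hφ.2]
end

section
/- Let a_0,…,a_r and b_0,…,b_r be real numbers with (a_r, b_r) ≠ (0,0), and set P(n) = Σ_{k=0}^r (a_k + i b_k) n^k. Suppose there exists N such that for all integers n ≥ N, Im(P(n) · conj(a_r + i b_r)) ≤ 0. Then b_r a_{r-1} − b_{r-1} a_r ≥ 0. -/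
lemma aux_pos_poly (c : ℕ → ℝ) (d : ℕ) (hc : 0 < c d) (n : ℝ) (hn1 : 1 ≤ n)
    (hn2 : (∑ k ∈ Finset.range d, |c k|) / c d < n) :
    0 < ∑ k ∈ Finset.range (d + 1), c k * n ^ k := by
  rcases Nat.eq_zero_or_pos d with h0 | hd
  · subst h0; simpa using hc
  have hn0 : 0 < n := lt_of_lt_of_le one_pos hn1
  have hS : (∑ k ∈ Finset.range d, |c k|) < c d * n := by
    rw [div_lt_iff₀ hc] at hn2; linarith
  have hP : 0 < n ^ (d - 1) := pow_pos hn0 _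
  have habs : |∑ k ∈ Finset.range d, c k * n ^ k| ≤
      (∑ k ∈ Finset.range d, |c k|) * n ^ (d - 1) := by
    calc |∑ k ∈ Finset.range d, c k * n ^ k| ≤ ∑ k ∈ Finset.range d, |c k * n ^ k| :=
          Finset.abs_sum_le_sum_abs _ _
      _ ≤ ∑ k ∈ Finset.range d, |c k| * n ^ (d - 1) := by
          refine Finset.sum_le_sum fun k hk => ?_
          rw [abs_mul, abs_pow, abs_of_nonneg hn0.le]
          have hk' : k ≤ d - 1 := by
            have := Finset.mem_range.mp hk; omega
          exact mul_le_mul_of_nonneg_left (pow_le_pow_right₀ hn1 hk') (abs_nonneg _)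
      _ = (∑ k ∈ Finset.range d, |c k|) * n ^ (d - 1) := (Finset.sum_mul _ _ _).symm
  have heq : c d * n ^ d = (c d * n) * n ^ (d - 1) := by
    have hd1 : d - 1 + 1 = d := by omega
    rw [mul_assoc, ← pow_succ', hd1]
  have hlow := (abs_le.mp habs).1
  have hmul : (∑ k ∈ Finset.range d, |c k|) * n ^ (d - 1) < (c d * n) * n ^ (d - 1) :=
    mul_lt_mul_of_pos_right hS hP
  rw [Finset.sum_range_succ]
  nlinarith [hlow, hmul, heq]

theorem quadratic_ineq_from_half_plane
    (r : ℕ) (hr : 1 ≤ r) (a b : ℕ → ℝ)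
    (hab : ¬(a r = 0 ∧ b r = 0))
    (h : ∃ N : ℤ, ∀ n : ℤ, N ≤ n →
      ((∑ k ∈ Finset.range (r + 1), (a k + Complex.I * b k) * (n : ℂ) ^ k) *
        (starRingEnd ℂ) (a r + Complex.I * b r)).im ≤ 0) :
    0 ≤ b r * a (r - 1) - b (r - 1) * a r := by
  by_contra hgoal
  push_neg at hgoal
  set c : ℕ → ℝ := fun k => b k * a r - a k * b r with hc
  set d := r - 1 with hdr
  have hcd : 0 < c d := by
    simp only [hc]
    linarith
  obtain ⟨N, hN⟩ := h
  set S := ∑ k ∈ Finset.range d, |c k| with hSdef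
  set n : ℤ := max N (max 1 (⌈S / c d⌉ + 1)) with hn
  have hnN : N ≤ n := le_max_left _ _
  have key := hN n hnN
  -- rewrite the imaginary part as a real sum
  have him : ((∑ k ∈ Finset.range (r + 1), (a k + Complex.I * b k) * (n : ℂ) ^ k) *
        (starRingEnd ℂ) (a r + Complex.I * b r)).im
      = ∑ k ∈ Finset.range (r + 1), c k * (n : ℝ) ^ k := by
    rw [Finset.sum_mul, Complex.im_sum]
    refine Finset.sum_congr rfl fun k _ => ?_
    have hx : ((n : ℂ)) ^ k = ((((n : ℝ) ^ k : ℝ)) : ℂ) := by push_cast; ring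
    rw [hx]
    simp only [map_add, map_mul, Complex.conj_I, Complex.conj_ofReal, Complex.mul_im,
      Complex.mul_re, Complex.add_im, Complex.add_re, Complex.ofReal_im, Complex.ofReal_re,
      Complex.neg_im, Complex.neg_re, Complex.I_im, Complex.I_re, hc]
    ring
  rw [him] at key
  have hrr : r = d + 1 := by omega
  rw [hrr, Finset.sum_range_succ] at key
  have hcr : c (d + 1) = 0 := by
    have : d + 1 = r := by omega
    rw [this]; simp [hc]; ring
  rw [hcr] at key
  simp only [zero_mul, add_zero] at key
  -- now contradiction with positivity
  have hn1 : (1 : ℝ) ≤ (n : ℝ) := by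
    have : (1 : ℤ) ≤ n := le_trans (le_max_left _ _) (le_max_right _ _)
    exact_mod_cast this
  have hn2 : S / c d < (n : ℝ) := by
    have h1 : (⌈S / c d⌉ + 1 : ℤ) ≤ n := le_trans (le_max_right _ _) (le_max_right _ _)
    have h2 : S / c d ≤ (⌈S / c d⌉ : ℝ) := Int.le_ceil _
    have h3 : ((⌈S / c d⌉ + 1 : ℤ) : ℝ) ≤ (n : ℝ) := by exact_mod_cast h1
    push_cast at h3
    linarith
  have := aux_pos_poly c d hcd (n : ℝ) hn1 hn2
  linarith
end

section
/- Let t > 0, l ≥ 1, and for k = 1,…,l let a_k, b_k, c_k, d_k be real numbers with b_k > 0, such that: (i) the slopes satisfy −a_1/b_1 > −a_2/b_2 > ⋯ > −a_l/b_l; (ii) b_k d_k − c_k a_k ≥ 0 for every k; and (iii) for every 1 ≤ j ≤ l, (Σ_{k=1}^j (−a_k + t c_k)) / (Σ_{k=1}^j b_k) ≤ (−A + tC)/B, where A = Σ_k a_k, B = Σ_k b_k, C = Σ_k c_k, D = Σ_k d_k. Then B·D − A·C ≥ (1/t) · Σ_{1 ≤ i < j ≤ l} ( (a_i/√(b_i))√(b_j)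 − (a_j/√(b_j))√(b_i) )² ≥ 0. Moreover, if B·D − A·C = 0 then l = 1. -/
open Finset

/-- Abel-summation style lemma: if `μ` is non-increasing on `[1,l]` and all proper
partial sums of `x` are `≤ 0`, then `∑ x k * μ k ≤ (∑ x k) * μ l`. -/
private lemma abel_aux (μ x : ℕ → ℝ) :
    ∀ l : ℕ, (∀ k, 1 ≤ k → k < l → μ (k + 1) ≤ μ k) →
      (∀ j, 1 ≤ j → j < l → (∑ k ∈ Finset.Icc 1 j, x k) ≤ 0) →
      (∑ k ∈ Finset.Icc 1 l, x k * μ k) ≤ (∑ k ∈ Finset.Icc 1 l, x k) * μ l := by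
  intro l
  induction l with
  | zero => simp
  | succ n ih =>
    intro hμ hx
    rcases Nat.eq_zero_or_pos n with hn | hn
    · subst hn; simp
    · have h1 : (1 : ℕ) ≤ n + 1 := by omega
      rw [Finset.sum_Icc_succ_top h1, Finset.sum_Icc_succ_top h1]
      have ihh := ih (fun k hk hkn => hμ k hk (by omega)) (fun j hj hjn => hx j hj (by omega))
      have hXn : (∑ k ∈ Finset.Icc 1 n, x k) ≤ 0 := hx n hn (by omega)
      have hμn : μ (n + 1) ≤ μ n := hμ n hn (by omega)
      nlinarith [ihh]

set_option maxHeartbeats 1000000 in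
theorem bogomolov_type_numerical_core
    (t : ℝ) (ht : 0 < t) (l : ℕ) (hl : 1 ≤ l)
    (a b c d : ℕ → ℝ)
    (hb : ∀ k ∈ Finset.Icc 1 l, 0 < b k)
    (hslope : ∀ k : ℕ, 1 ≤ k → k < l → -a k / b k > -a (k + 1) / b (k + 1))
    (hquad : ∀ k ∈ Finset.Icc 1 l, 0 ≤ b k * d k - c k * a k)
    (hsemistable : ∀ j : ℕ, 1 ≤ j → j ≤ l →
      (∑ k ∈ Finset.Icc 1 j, (-a k + t * c k)) / (∑ k ∈ Finset.Icc 1 j, b k)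
        ≤ (-(∑ k ∈ Finset.Icc 1 l, a k) + t * (∑ k ∈ Finset.Icc 1 l, c k))
            / (∑ k ∈ Finset.Icc 1 l, b k)) :
    ((∑ k ∈ Finset.Icc 1 l, b k) * (∑ k ∈ Finset.Icc 1 l, d k)
        - (∑ k ∈ Finset.Icc 1 l, a k) * (∑ k ∈ Finset.Icc 1 l, c k)
      ≥ (1 / t) * ∑ p ∈ (Finset.Icc 1 l ×ˢ Finset.Icc 1 l).filter (fun p => p.1 < p.2),
          (a p.1 / Real.sqrt (b p.1) * Real.sqrt (b p.2)
            - a p.2 / Real.sqrt (b p.2) * Real.sqrt (b p.1)) ^ 2) ∧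
    (0 ≤ (1 / t) * ∑ p ∈ (Finset.Icc 1 l ×ˢ Finset.Icc 1 l).filter (fun p => p.1 < p.2),
          (a p.1 / Real.sqrt (b p.1) * Real.sqrt (b p.2)
            - a p.2 / Real.sqrt (b p.2) * Real.sqrt (b p.1)) ^ 2) ∧
    ((∑ k ∈ Finset.Icc 1 l, b k) * (∑ k ∈ Finset.Icc 1 l, d k)
        - (∑ k ∈ Finset.Icc 1 l, a k) * (∑ k ∈ Finset.Icc 1 l, c k) = 0 → l = 1) := by
  set s : Finset ℕ := Finset.Icc 1 l with hsdef
  set A : ℝ := ∑ k ∈ s, a k with hA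
  set B : ℝ := ∑ k ∈ s, b k with hB
  set C : ℝ := ∑ k ∈ s, c k with hC
  set D : ℝ := ∑ k ∈ s, d k with hD
  set Q0 : ℝ := ∑ k ∈ s, a k ^ 2 / b k with hQ0
  -- positivity of partial sums of b
  have hBj : ∀ j, 1 ≤ j → j ≤ l → 0 < ∑ k ∈ Finset.Icc 1 j, b k := by
    intro j hj hjl
    apply Finset.sum_pos
    · intro k hk
      exact hb k (Finset.mem_Icc.mpr ⟨(Finset.mem_Icc.mp hk).1, le_trans (Finset.mem_Icc.mp hk).2 hjl⟩)
    · exact ⟨1, Finset.mem_Icc.mpr ⟨le_refl 1, hj⟩⟩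
  have hBpos : 0 < B := hBj l hl le_rfl
  set ν : ℝ := (-A + t * C) / B with hν
  have hνB : ν * B = -A + t * C := by
    rw [hν, div_mul_cancel₀ _ hBpos.ne']
  -- semistability in product form
  have hsemi' : ∀ j, 1 ≤ j → j < l →
      (∑ k ∈ Finset.Icc 1 j, ((-a k + t * c k) - ν * b k)) ≤ 0 := by
    intro j hj hjl
    have h1 := hsemistable j hj (le_of_lt hjl)
    have h2 : (∑ k ∈ Finset.Icc 1 j, (-a k + t * c k)) ≤ ν * (∑ k ∈ Finset.Icc 1 j, b k) := by
      rw [div_le_div_iff₀ (hBj j hj (le_of_lt hjl)) hBpos] at h1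
      have hBjpos := hBj j hj (le_of_lt hjl)
      rw [hν]
      rw [div_mul_eq_mul_div, le_div_iff₀ hBpos]
      linarith [h1]
    rw [Finset.sum_sub_distrib, ← Finset.mul_sum]
    linarith
  -- key Abel estimate
  have habel := abel_aux (fun k => -a k / b k) (fun k => (-a k + t * c k) - ν * b k) l
    (fun k hk hkl => le_of_lt (hslope k hk hkl)) hsemi'
  have hXl : (∑ k ∈ s, ((-a k + t * c k) - ν * b k)) = 0 := by
    have e1 : (∑ k ∈ s, ((-a k + t * c k) - ν * b k)) = (-A + t * C) - ν * B := by
      rw [Finset.sum_sub_distrib, Finset.sum_add_distrib, ← Finset.mul_sum, ← Finset.mul_sum,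
        Finset.sum_neg_distrib, ← hA, ← hB, ← hC]
    rw [e1, hνB]
    ring
  have habel' : (∑ k ∈ s, ((-a k + t * c k) - ν * b k) * (-a k / b k)) ≤ 0 := by
    calc (∑ k ∈ s, ((-a k + t * c k) - ν * b k) * (-a k / b k))
        ≤ (∑ k ∈ s, ((-a k + t * c k) - ν * b k)) * (-a l / b l) := habel
      _ = 0 := by rw [hXl]; ring
  -- rewrite the Abel sum termwise
  have hterm : ∀ k ∈ s, ((-a k + t * c k) - ν * b k) * (-a k / b k)
      = a k ^ 2 / b k - t * (c k * a k / b k) + ν * a k := by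
    intro k hk
    have hbk := (hb k hk).ne'
    field_simp
    ring
  have hkey1 : Q0 - t * (∑ k ∈ s, c k * a k / b k) + ν * A ≤ 0 := by
    have := habel'
    rw [Finset.sum_congr rfl hterm] at this
    rw [Finset.sum_add_distrib, Finset.sum_sub_distrib, ← Finset.mul_sum, ← Finset.mul_sum] at this
    rw [hQ0, hA]
    linarith
  -- discriminant inequality per factor
  have hDd : t * D ≥ t * (∑ k ∈ s, c k * a k / b k) := by
    have : (∑ k ∈ s, c k * a k / b k) ≤ D := by
      rw [hD]
      apply Finset.sum_le_sum
      intro k hk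
      have hbk := hb k hk
      rw [div_le_iff₀ hbk]
      have := hquad k hk
      nlinarith
    nlinarith
  have hkey2 : B * Q0 - A ^ 2 ≤ t * (B * D - A * C) := by
    have h3 : t * D ≥ Q0 + ν * A := by linarith
    have h4 : t * (B * D) ≥ B * Q0 + ν * A * B := by nlinarith
    have h5 : ν * A * B = (-A + t * C) * A := by rw [← hνB]; ring
    nlinarith [h4, h5]
  -- the pair sum equals B * Q0 - A ^ 2
  set g : ℕ × ℕ → ℝ := fun p => a p.1 ^ 2 * (b p.2 / b p.1) + a p.2 ^ 2 * (b p.1 / b p.2)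
      - 2 * (a p.1 * a p.2) with hg
  have hpair : ∀ p : ℕ × ℕ, p.1 ∈ s → p.2 ∈ s →
      (a p.1 / Real.sqrt (b p.1) * Real.sqrt (b p.2)
        - a p.2 / Real.sqrt (b p.2) * Real.sqrt (b p.1)) ^ 2 = g p := by
    intro p h1 h2
    have hb1 := hb p.1 h1
    have hb2 := hb p.2 h2
    have hu : Real.sqrt (b p.1) ^ 2 = b p.1 := Real.sq_sqrt hb1.le
    have hv : Real.sqrt (b p.2) ^ 2 = b p.2 := Real.sq_sqrt hb2.le
    have hu0 : Real.sqrt (b p.1) ≠ 0 := by positivity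
    have hv0 : Real.sqrt (b p.2) ≠ 0 := by positivity
    have hu2 : b p.1 = Real.sqrt (b p.1) * Real.sqrt (b p.1) :=
      (Real.mul_self_sqrt hb1.le).symm
    have hv2 : b p.2 = Real.sqrt (b p.2) * Real.sqrt (b p.2) :=
      (Real.mul_self_sqrt hb2.le).symm
    simp only [hg]
    generalize hU : Real.sqrt (b p.1) = u at *
    generalize hV : Real.sqrt (b p.2) = v at *
    rw [hu2, hv2]
    have hu0' : u ≠ 0 := hu0
    have hv0' : v ≠ 0 := hv0
    field_simp
    ring
  -- sum of g over the whole product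
  have hprod : (∑ p ∈ s ×ˢ s, g p) = 2 * (B * Q0 - A ^ 2) := by
    rw [Finset.sum_product]
    have hinner : ∀ i ∈ s, (∑ j ∈ s, g (i, j))
        = a i ^ 2 / b i * B + Q0 * b i - 2 * a i * A := by
      intro i hi
      have hrw : ∀ j ∈ s, g (i, j)
          = a i ^ 2 / b i * b j + a j ^ 2 / b j * b i - 2 * a i * a j := by
        intro j hj; simp only [hg]; ring
      rw [Finset.sum_congr rfl hrw, Finset.sum_sub_distrib, Finset.sum_add_distrib,
        ← Finset.mul_sum, ← Finset.sum_mul, ← Finset.mul_sum, ← hB, ← hA, ← hQ0]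
    rw [Finset.sum_congr rfl hinner, Finset.sum_sub_distrib, Finset.sum_add_distrib,
      ← Finset.sum_mul, ← Finset.mul_sum, ← Finset.sum_mul, ← Finset.mul_sum,
      ← hB, ← hA, ← hQ0]
    ring
  -- split into <, >, = parts
  have hsplit1 := Finset.sum_filter_add_sum_filter_not (s ×ˢ s) (fun p => p.1 < p.2) g
  have hswapset : ((s ×ˢ s).filter fun p => ¬ p.1 < p.2).filter (fun p => p.2 < p.1)
      = (s ×ˢ s).filter (fun p => p.2 < p.1) := by
    rw [Finset.filter_filter]
    apply Finset.filter_congr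
    intro p hp
    constructor
    · rintro ⟨_, h⟩; exact h
    · intro h; exact ⟨by omega, h⟩
  have hsplit2 := Finset.sum_filter_add_sum_filter_not
    ((s ×ˢ s).filter fun p => ¬ p.1 < p.2) (fun p => p.2 < p.1) g
  have hdiag : (∑ p ∈ ((s ×ˢ s).filter fun p => ¬ p.1 < p.2).filter
      (fun p => ¬ p.2 < p.1), g p) = 0 := by
    apply Finset.sum_eq_zero
    intro p hp
    simp only [Finset.mem_filter, Finset.mem_product] at hp
    have heq : p.1 = p.2 := by omega
    have hbp : b p.1 ≠ 0 := (hb p.1 hp.1.1.1).ne'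
    simp only [hg]
    simp only [← heq]
    rw [div_self hbp]
    ring
  have hswapsum : (∑ p ∈ (s ×ˢ s).filter (fun p => p.2 < p.1), g p)
      = ∑ p ∈ (s ×ˢ s).filter (fun p => p.1 < p.2), g p := by
    apply Finset.sum_nbij' (i := Prod.swap) (j := Prod.swap)
    · intro p hp
      simp only [Finset.mem_filter, Finset.mem_product] at hp ⊢
      exact ⟨⟨hp.1.2, hp.1.1⟩, hp.2⟩
    · intro p hp
      simp only [Finset.mem_filter, Finset.mem_product] at hp ⊢
      exact ⟨⟨hp.1.2, hp.1.1⟩, hp.2⟩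
    · intro p _; rfl
    · intro p _; rfl
    · intro p _
      simp only [hg]
      simp only [Prod.fst_swap, Prod.snd_swap]
      ring
  have hhalf : (∑ p ∈ (s ×ˢ s).filter (fun p => p.1 < p.2), g p) = B * Q0 - A ^ 2 := by
    have e2 : (∑ p ∈ (s ×ˢ s).filter (fun p => ¬ p.1 < p.2), g p)
        = ∑ p ∈ (s ×ˢ s).filter (fun p => p.1 < p.2), g p := by
      rw [← hsplit2, hswapset, hswapsum, hdiag, add_zero]
    rw [e2] at hsplit1
    linarith [hsplit1, hprod]
  set P : ℝ := ∑ p ∈ (s ×ˢ s).filter (fun p => p.1 < p.2),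
      (a p.1 / Real.sqrt (b p.1) * Real.sqrt (b p.2)
        - a p.2 / Real.sqrt (b p.2) * Real.sqrt (b p.1)) ^ 2 with hP
  have hPg : P = ∑ p ∈ (s ×ˢ s).filter (fun p => p.1 < p.2), g p := by
    rw [hP]
    apply Finset.sum_congr rfl
    intro p hp
    simp only [Finset.mem_filter, Finset.mem_product] at hp
    exact hpair p hp.1.1 hp.1.2
  have hPval : P = B * Q0 - A ^ 2 := by rw [hPg, hhalf]
  have hmain : B * D - A * C ≥ (1 / t) * P := by
    rw [ge_iff_le, div_mul_eq_mul_div, div_le_iff₀ ht]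
    calc (1 : ℝ) * P = B * Q0 - A ^ 2 := by rw [hPval]; ring
      _ ≤ t * (B * D - A * C) := hkey2
      _ = (B * D - A * C) * t := by ring
  have hPnonneg : 0 ≤ (1 / t) * P := by
    apply mul_nonneg (one_div_pos.mpr ht).le
    rw [hP]
    exact Finset.sum_nonneg fun p _ => sq_nonneg _
  refine ⟨hmain, hPnonneg, ?_⟩
  intro h0
  by_contra hne
  have hl2 : 2 ≤ l := by omega
  -- the (1,2) term is strictly positive
  have h1s : (1 : ℕ) ∈ s := Finset.mem_Icc.mpr ⟨le_rfl, hl⟩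
  have h2s : (2 : ℕ) ∈ s := Finset.mem_Icc.mpr ⟨by omega, hl2⟩
  have hmem : ((1 : ℕ), (2 : ℕ)) ∈ (s ×ˢ s).filter (fun p => p.1 < p.2) := by
    simp only [Finset.mem_filter, Finset.mem_product]
    exact ⟨⟨h1s, h2s⟩, by omega⟩
  have hb1 := hb 1 h1s
  have hb2 := hb 2 h2s
  have hsl := hslope 1 le_rfl (by omega)
  have hz : (a 1 / Real.sqrt (b 1) * Real.sqrt (b 2)
      - a 2 / Real.sqrt (b 2) * Real.sqrt (b 1))
      = Real.sqrt (b 1) * Real.sqrt (b 2) * (a 1 / b 1 - a 2 / b 2) := by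
    have hu0 : Real.sqrt (b 1) ≠ 0 := Real.sqrt_ne_zero'.mpr hb1
    have hv0 : Real.sqrt (b 2) ≠ 0 := Real.sqrt_ne_zero'.mpr hb2
    have hu2 : b 1 = Real.sqrt (b 1) * Real.sqrt (b 1) := (Real.mul_self_sqrt hb1.le).symm
    have hv2 : b 2 = Real.sqrt (b 2) * Real.sqrt (b 2) := (Real.mul_self_sqrt hb2.le).symm
    generalize hU : Real.sqrt (b 1) = u at hu0 hu2 ⊢
    generalize hV : Real.sqrt (b 2) = v at hv0 hv2 ⊢
    rw [hu2, hv2]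
    field_simp
  have hzne : (a 1 / Real.sqrt (b 1) * Real.sqrt (b 2)
      - a 2 / Real.sqrt (b 2) * Real.sqrt (b 1)) ≠ 0 := by
    rw [hz]
    have hss : 0 < Real.sqrt (b 1) * Real.sqrt (b 2) :=
      mul_pos (Real.sqrt_pos.mpr hb1) (Real.sqrt_pos.mpr hb2)
    have hd : a 1 / b 1 - a 2 / b 2 < 0 := by
      have : -a 2 / b 2 < -a 1 / b 1 := hsl
      have e1 : -a 1 / b 1 = -(a 1 / b 1) := by ring
      have e2 : -a 2 / b 2 = -(a 2 / b 2) := by ring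
      rw [e1, e2] at this
      linarith
    exact ne_of_lt (mul_neg_of_pos_of_neg hss hd)
  have hpos : 0 < (a 1 / Real.sqrt (b 1) * Real.sqrt (b 2)
      - a 2 / Real.sqrt (b 2) * Real.sqrt (b 1)) ^ 2 :=
    lt_of_le_of_ne (sq_nonneg _) (Ne.symm (pow_ne_zero 2 hzne))
  have hPpos : 0 < P := by
    rw [hP]
    refine lt_of_lt_of_le hpos (Finset.single_le_sum
      (f := fun p : ℕ × ℕ => (a p.1 / Real.sqrt (b p.1) * Real.sqrt (b p.2)
        - a p.2 / Real.sqrt (b p.2) * Real.sqrt (b p.1)) ^ 2)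
      (fun p _ => sq_nonneg _) hmem)
  have : 0 < (1 / t) * P := mul_pos (one_div_pos.mpr ht) hPpos
  rw [h0] at hmain
  linarith
end
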